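/- (Corollary 1.) Let γ : ℝ^{Nd}_+ → ℝ_+ be monotone and DR-submodular with γ(0) = 0, let X = ∏_{i=1}^N X_i with each X_i ⊆ ℝ^d_+, and define the game with strategy sets X_i and payoffs π̂_i(x) = γ(x) − γ(0, x_{-i}). Suppose for some α ∈ [0,1] the curvature bound γ(x + x') − γ(x') ≥ (1 − α) γ(x) holds for all x, x' ∈ X. Then for any coarse correlated equilibrium σ of this game (with the relevant integrands integrable) and any x⋆ ∈ X, ∫ γ(x) dσ(x) ≥ γ(x⋆) / (1 + α). -/

import Mathlib

open MeasureTheory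

/-- `f` is monotone on `X`: `f x ≤ f y` whenever `x ≤ y` in `X`. -/
def MonotoneOnSet {ι : Type*} (X : Set (ι → ℝ)) (f : (ι → ℝ) → ℝ) : Prop :=
  ∀ ⦃x⦄, x ∈ X → ∀ ⦃y⦄, y ∈ X → x ≤ y → f x ≤ f y

/-- `f` is DR-submodular on `X`. -/
def DRSubmodularOn {ι : Type*} [DecidableEq ι] (X : Set (ι → ℝ)) (f : (ι → ℝ) → ℝ) : Prop :=
  ∀ ⦃x y : ι → ℝ⦄, x ∈ X → y ∈ X → x ≤ y →
    ∀ i : ι, ∀ k : ℝ, 0 ≤ k →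
      x + Pi.single i k ∈ X → y + Pi.single i k ∈ X →
        f (x + Pi.single i k) - f x ≥ f (y + Pi.single i k) - f y

/-- Replace player `i`'s block of the joint strategy `x` by `v`, i.e. the outcome
`(v, x₋ᵢ)`. -/
def upd {N d : ℕ} (x : Fin N × Fin d → ℝ) (i : Fin N) (v : Fin d → ℝ) :
    Fin N × Fin d → ℝ :=
  fun q => if q.1 = i then v q.2 else x q

/-- The joint strategy space `X = ∏ᵢ Xᵢ`, viewed inside `ℝ^{Nd}`. -/
def joint {N d : ℕ} (X : Fin N → Set (Fin d → ℝ)) : Set (Fin N × Fin d → ℝ) :=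
  {x | ∀ i : Fin N, (fun r => x (i, r)) ∈ X i}

lemma single_nonneg' {ι : Type*} [DecidableEq ι] (a : ι) {k : ℝ} (hk : 0 ≤ k) :
    (0 : ι → ℝ) ≤ Pi.single a k := by
  intro q
  by_cases h : q = a
  · subst h; simpa using hk
  · simp [Pi.single_apply, h]

/-- Block of value `w` at player `i`. -/
def blk {N d : ℕ} (i : Fin N) (w : Fin d → ℝ) : Fin N × Fin d → ℝ :=
  fun q => if q.1 = i then w q.2 else 0

lemma blk_eq_sum {N d : ℕ} (i : Fin N) (w : Fin d → ℝ) :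
    blk i w = ∑ r : Fin d, (Pi.single ((i, r) : Fin N × Fin d) (w r) : Fin N × Fin d → ℝ) := by
  funext q
  obtain ⟨j, t⟩ := q
  rw [Finset.sum_apply]
  simp only [Pi.single_apply, Prod.mk.injEq, blk]
  by_cases hj : j = i
  · subst hj
    simp
  · simp [hj]

lemma blk_nonneg {N d : ℕ} (i : Fin N) {w : Fin d → ℝ} (hw : 0 ≤ w) :
    (0 : Fin N × Fin d → ℝ) ≤ blk i w := by
  intro q
  by_cases h : q.1 = i
  · simpa [blk, h] using hw q.2
  · simp [blk, h]

lemma blockDR_aux {N d : ℕ} (γ : (Fin N × Fin d → ℝ) → ℝ)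
    (hDR : DRSubmodularOn {x : Fin N × Fin d → ℝ | 0 ≤ x} γ)
    (i : Fin N) (w : Fin d → ℝ) (hw : 0 ≤ w) (s : Finset (Fin d)) :
    ∀ x y : Fin N × Fin d → ℝ, 0 ≤ x → x ≤ y → 0 ≤ y →
      γ (x + ∑ r ∈ s, (Pi.single ((i, r) : Fin N × Fin d) (w r) : Fin N × Fin d → ℝ)) - γ x
        ≥ γ (y + ∑ r ∈ s, (Pi.single ((i, r) : Fin N × Fin d) (w r) : Fin N × Fin d → ℝ)) - γ y := by
  induction s using Finset.induction_on with
  | empty => intro x y hx hxy hy; simp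
  | @insert r s hr ih =>
    intro x y hx hxy hy
    have hB : (0 : Fin N × Fin d → ℝ) ≤ ∑ t ∈ s, (Pi.single ((i, t) : Fin N × Fin d) (w t) : Fin N × Fin d → ℝ) :=
      Finset.sum_nonneg fun t _ => single_nonneg' _ (hw t)
    set B := ∑ t ∈ s, (Pi.single ((i, t) : Fin N × Fin d) (w t) : Fin N × Fin d → ℝ) with hBdef
    have hx' : (0 : Fin N × Fin d → ℝ) ≤ x + B := add_nonneg hx hB
    have hy' : (0 : Fin N × Fin d → ℝ) ≤ y + B := add_nonneg hy hB
    have hs : (0 : Fin N × Fin d → ℝ) ≤ (Pi.single ((i, r) : Fin N × Fin d) (w r) : Fin N × Fin d → ℝ) :=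
      single_nonneg' _ (hw r)
    have h1 := hDR (x := x + B) (y := y + B) hx' hy' (add_le_add_left hxy B)
      (i, r) (w r) (hw r) (add_nonneg hx' hs) (add_nonneg hy' hs)
    have h2 := ih x y hx hxy hy
    have e1 : x + ∑ t ∈ insert r s, (Pi.single ((i, t) : Fin N × Fin d) (w t) : Fin N × Fin d → ℝ)
        = x + B + (Pi.single ((i, r) : Fin N × Fin d) (w r) : Fin N × Fin d → ℝ) := by
      rw [Finset.sum_insert hr, ← hBdef]; abel
    have e2 : y + ∑ t ∈ insert r s, (Pi.single ((i, t) : Fin N × Fin d) (w t) : Fin N × Fin d → ℝ)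
        = y + B + (Pi.single ((i, r) : Fin N × Fin d) (w r) : Fin N × Fin d → ℝ) := by
      rw [Finset.sum_insert hr, ← hBdef]; abel
    rw [e1, e2]
    linarith

lemma blockDR {N d : ℕ} (γ : (Fin N × Fin d → ℝ) → ℝ)
    (hDR : DRSubmodularOn {x : Fin N × Fin d → ℝ | 0 ≤ x} γ)
    (i : Fin N) (w : Fin d → ℝ) (hw : 0 ≤ w)
    {x y : Fin N × Fin d → ℝ} (hx : 0 ≤ x) (hxy : x ≤ y) (hy : 0 ≤ y) :
    γ (x + blk i w) - γ x ≥ γ (y + blk i w) - γ y := by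
  rw [blk_eq_sum]
  exact blockDR_aux γ hDR i w hw Finset.univ x y hx hxy hy


/-- Keep the first `k` blocks of `y`, zero the rest. -/
def par {N d : ℕ} (y : Fin N × Fin d → ℝ) (k : ℕ) : Fin N × Fin d → ℝ :=
  fun q => if (q.1 : ℕ) < k then y q else 0

lemma par_zero {N d : ℕ} (y : Fin N × Fin d → ℝ) : par y 0 = 0 := by
  funext q; simp [par]

lemma par_top {N d : ℕ} (y : Fin N × Fin d → ℝ) : par y N = y := by
  funext q; simp [par, q.1.isLt]

lemma par_nonneg {N d : ℕ} {y : Fin N × Fin d → ℝ} (hy : 0 ≤ y) (k : ℕ) :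
    (0 : Fin N × Fin d → ℝ) ≤ par y k := by
  intro q; dsimp [par]; split
  · exact hy q
  · exact le_refl 0

lemma par_step {N d : ℕ} (y : Fin N × Fin d → ℝ) (i : Fin N) :
    par y (i.val + 1) = par y i.val + blk i (fun r => y (i, r)) := by
  funext q
  obtain ⟨j, t⟩ := q
  show (if (j : ℕ) < i.val + 1 then y (j, t) else 0)
      = (if (j : ℕ) < i.val then y (j, t) else 0) + (if j = i then y (i, t) else 0)
  rcases lt_trichotomy (j : ℕ) (i : ℕ) with h | h | h
  · have hji : j ≠ i := fun he => by simp [he] at h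
    rw [if_pos (by omega), if_pos h, if_neg hji, add_zero]
  · have hji : j = i := Fin.ext h
    subst hji
    rw [if_pos (by omega), if_neg (by omega), if_pos rfl, zero_add]
  · have hji : j ≠ i := fun he => by simp [he] at h
    rw [if_neg (by omega), if_neg (by omega), if_neg hji, add_zero]

lemma upd_nonneg {N d : ℕ} {x : Fin N × Fin d → ℝ} (hx : 0 ≤ x) (i : Fin N)
    {v : Fin d → ℝ} (hv : 0 ≤ v) : (0 : Fin N × Fin d → ℝ) ≤ upd x i v := by
  intro q; dsimp [upd]; split
  · exact hv q.2
  · exact hx q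

lemma upd_add_blk {N d : ℕ} (x : Fin N × Fin d → ℝ) (i : Fin N) (v : Fin d → ℝ) :
    upd x i 0 + blk i v = upd x i v := by
  funext q
  by_cases h : q.1 = i
  · simp [upd, blk, h]
  · simp [upd, blk, h]

lemma upd_self {N d : ℕ} (x : Fin N × Fin d → ℝ) (i : Fin N) :
    upd x i (fun r => x (i, r)) = x := by
  funext q
  by_cases h : q.1 = i
  · simp only [upd, if_pos h, ← h, Prod.mk.eta, ite_self]
  · simp [upd, h]

/-- Lemma A: total payoff is at most welfare. -/
lemma sum_payoff_le {N d : ℕ} (γ : (Fin N × Fin d → ℝ) → ℝ) (hγ0 : γ 0 = 0)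
    (hDR : DRSubmodularOn {x : Fin N × Fin d → ℝ | 0 ≤ x} γ)
    {x : Fin N × Fin d → ℝ} (hx : 0 ≤ x) :
    ∑ i : Fin N, (γ x - γ (upd x i 0)) ≤ γ x := by
  have hpar_le : ∀ i : Fin N, par x i.val ≤ upd x i 0 := by
    intro i q
    dsimp [par, upd]
    rcases eq_or_ne q.1 i with h | h
    · rw [if_neg (by simp [h]), if_pos h]
    · rw [if_neg h]
      split
      · exact le_refl _
      · exact hx q
  have hstep : ∀ i : Fin N, γ x - γ (upd x i 0) ≤ γ (par x (i.val + 1)) - γ (par x i.val) := by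
    intro i
    have h := blockDR γ hDR i (fun r => x (i, r)) (fun r => hx (i, r))
      (par_nonneg hx i.val) (hpar_le i) (upd_nonneg hx i (le_refl 0))
    rw [upd_add_blk, upd_self, ← par_step] at h
    linarith
  calc ∑ i : Fin N, (γ x - γ (upd x i 0))
      ≤ ∑ i : Fin N, (γ (par x (i.val + 1)) - γ (par x i.val)) :=
        Finset.sum_le_sum fun i _ => hstep i
    _ = ∑ k ∈ Finset.range N, (γ (par x (k + 1)) - γ (par x k)) :=
        Fin.sum_univ_eq_sum_range (fun k => γ (par x (k + 1)) - γ (par x k)) N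
    _ = γ (par x N) - γ (par x 0) := Finset.sum_range_sub (fun k => γ (par x k)) N
    _ = γ x := by rw [par_top, par_zero, hγ0, sub_zero]

/-- Lemma B: total deviation gain is at least the marginal welfare of `xs`. -/
lemma sum_dev_ge {N d : ℕ} (γ : (Fin N × Fin d → ℝ) → ℝ)
    (hDR : DRSubmodularOn {x : Fin N × Fin d → ℝ | 0 ≤ x} γ)
    {x xs : Fin N × Fin d → ℝ} (hx : 0 ≤ x) (hxs : 0 ≤ xs) :
    ∑ i : Fin N, (γ (upd x i (fun r => xs (i, r))) - γ (upd x i 0))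
      ≥ γ (x + xs) - γ x := by
  have hQnn : ∀ k : ℕ, (0 : Fin N × Fin d → ℝ) ≤ x + par xs k :=
    fun k => add_nonneg hx (par_nonneg hxs k)
  have hle : ∀ i : Fin N, upd x i 0 ≤ x + par xs i.val := by
    intro i q
    dsimp [upd, par, Pi.add_apply]
    rcases eq_or_ne q.1 i with h | h
    · rw [if_pos h]
      refine add_nonneg (hx q) ?_
      split
      · exact hxs q
      · exact le_refl _
    · rw [if_neg h]
      refine le_add_of_nonneg_right ?_
      split
      · exact hxs q
      · exact le_refl _
  have hstep : ∀ i : Fin N,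
      γ (x + par xs (i.val + 1)) - γ (x + par xs i.val)
        ≤ γ (upd x i (fun r => xs (i, r))) - γ (upd x i 0) := by
    intro i
    have h := blockDR γ hDR i (fun r => xs (i, r)) (fun r => hxs (i, r))
      (upd_nonneg hx i (le_refl 0)) (hle i) (hQnn i.val)
    rw [upd_add_blk] at h
    have e : x + par xs i.val + blk i (fun r => xs (i, r)) = x + par xs (i.val + 1) := by
      rw [par_step]; abel
    rw [e] at h
    linarith
  calc γ (x + xs) - γ x
      = γ (x + par xs N) - γ (x + par xs 0) := by rw [par_top, par_zero, add_zero]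
    _ = ∑ k ∈ Finset.range N, (γ (x + par xs (k + 1)) - γ (x + par xs k)) :=
        (Finset.sum_range_sub (fun k => γ (x + par xs k)) N).symm
    _ = ∑ i : Fin N, (γ (x + par xs (i.val + 1)) - γ (x + par xs i.val)) :=
        (Fin.sum_univ_eq_sum_range (fun k => γ (x + par xs (k + 1)) - γ (x + par xs k)) N).symm
    _ ≤ ∑ i : Fin N, (γ (upd x i (fun r => xs (i, r))) - γ (upd x i 0)) :=
        Finset.sum_le_sum fun i _ => hstep i

/-- Corollary 1: for the designed game with payoffs `π̂ᵢ(x) = γ(x) − γ(0, x₋ᵢ)`, where `γ` is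
monotone DR-submodular with `γ(0) = 0` and curvature bound `α`, every coarse correlated
equilibrium `σ` satisfies `𝔼_{x∼σ}[γ(x)] ≥ γ(x⋆)/(1 + α)` for every `x⋆ ∈ X`. -/
theorem designed_game_cce_guarantee {N d : ℕ}
    (X : Fin N → Set (Fin d → ℝ)) (hX : ∀ i, ∀ v ∈ X i, 0 ≤ v)
    (γ : (Fin N × Fin d → ℝ) → ℝ) (hγ0 : γ 0 = 0)
    (hγnn : ∀ x : Fin N × Fin d → ℝ, 0 ≤ x → 0 ≤ γ x)
    (hmono : MonotoneOnSet {x : Fin N × Fin d → ℝ | 0 ≤ x} γ)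
    (hDR : DRSubmodularOn {x : Fin N × Fin d → ℝ | 0 ≤ x} γ)
    (α : ℝ) (hα0 : 0 ≤ α) (hα1 : α ≤ 1)
    (hcurv : ∀ x ∈ joint X, ∀ x' ∈ joint X, γ (x + x') - γ x' ≥ (1 - α) * γ x)
    (σ : Measure (Fin N × Fin d → ℝ)) [IsProbabilityMeasure σ]
    (hsupp : ∀ᵐ x ∂σ, x ∈ joint X)
    (hCCE : ∀ i : Fin N, ∀ v ∈ X i,
      (∫ x, (γ x - γ (upd x i 0)) ∂σ) ≥ ∫ x, (γ (upd x i v) - γ (upd x i 0)) ∂σ)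
    (hint_γ : Integrable γ σ)
    (hint_0 : ∀ i : Fin N, Integrable (fun x => γ (upd x i 0)) σ)
    (hint_dev : ∀ i : Fin N, ∀ v ∈ X i, Integrable (fun x => γ (upd x i v)) σ) :
    ∀ xstar ∈ joint X, (∫ x, γ x ∂σ) ≥ γ xstar / (1 + α) := by
  intro xstar hxstar
  have hnn : ∀ x ∈ joint X, (0 : Fin N × Fin d → ℝ) ≤ x := by
    intro x hx q
    simpa using hX q.1 _ (hx q.1) q.2
  have hxs0 : (0 : Fin N × Fin d → ℝ) ≤ xstar := hnn xstar hxstar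
  set I := ∫ x, γ x ∂σ with hI
  have hf : ∀ i : Fin N, Integrable (fun x => γ x - γ (upd x i 0)) σ :=
    fun i => hint_γ.sub (hint_0 i)
  have hg : ∀ i : Fin N,
      Integrable (fun x => γ (upd x i (fun r => xstar (i, r))) - γ (upd x i 0)) σ :=
    fun i => (hint_dev i _ (hxstar i)).sub (hint_0 i)
  have key1 : (∫ x, (∑ i : Fin N, (γ x - γ (upd x i 0))) ∂σ) ≤ I := by
    refine integral_mono_ae (integrable_finset_sum _ fun i _ => hf i) hint_γ ?_
    exact hsupp.mono fun x hx => sum_payoff_le γ hγ0 hDR (hnn x hx)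
  have key2 : (∫ x, (γ xstar - α * γ x) ∂σ)
      ≤ ∫ x, (∑ i : Fin N, (γ (upd x i (fun r => xstar (i, r))) - γ (upd x i 0))) ∂σ := by
    refine integral_mono_ae ((integrable_const (γ xstar)).sub (hint_γ.const_mul α))
      (integrable_finset_sum _ fun i _ => hg i) ?_
    refine hsupp.mono fun x hx => ?_
    have h1 := sum_dev_ge γ hDR (hnn x hx) hxs0
    have h2 := hcurv x hx xstar hxstar
    simp only
    linarith
  have key3 : (∫ x, (γ xstar - α * γ x) ∂σ) = γ xstar - α * I := by
    rw [integral_sub (integrable_const _) (hint_γ.const_mul α), integral_const,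
      integral_const_mul]
    simp [hI]
  have key4 : (∫ x, (∑ i : Fin N, (γ x - γ (upd x i 0))) ∂σ)
      = ∑ i : Fin N, ∫ x, (γ x - γ (upd x i 0)) ∂σ :=
    integral_finset_sum _ fun i _ => hf i
  have key5 : (∫ x, (∑ i : Fin N, (γ (upd x i (fun r => xstar (i, r))) - γ (upd x i 0))) ∂σ)
      = ∑ i : Fin N, ∫ x, (γ (upd x i (fun r => xstar (i, r))) - γ (upd x i 0)) ∂σ :=
    integral_finset_sum _ fun i _ => hg i
  have key6 : ∑ i : Fin N, (∫ x, (γ (upd x i (fun r => xstar (i, r))) - γ (upd x i 0)) ∂σ)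
      ≤ ∑ i : Fin N, ∫ x, (γ x - γ (upd x i 0)) ∂σ :=
    Finset.sum_le_sum fun i _ => hCCE i _ (hxstar i)
  have hmain : γ xstar - α * I ≤ I := by
    rw [key3] at key2
    rw [key5] at key2
    rw [key4] at key1
    linarith
  have hpos : (0 : ℝ) < 1 + α := by linarith
  rw [ge_iff_le, div_le_iff₀ hpos]
  nlinarith
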